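/- For all n ≥ 3, the only subspaces of F_2^n stable under the natural coordinate-permutation action of the symmetric group S_n are: the zero subspace, all of F_2^n, the span of the all-ones vector, and V_E = { v : |supp(v)| even }. -/
import Mathlib

open Finset

lemma zmod2_eq_one {a : ZMod 2} (h : a ≠ 0) : a = 1 := by revert h; revert a; decide

lemma zmod2_eq_zero {a : ZMod 2} (h : a ≠ 1) : a = 0 := by revert h; revert a; decide

lemma zmod2_one_one : (1 : ZMod 2) + 1 = 0 := by decide

lemma zmod2_add_self (a : ZMod 2) : a + a = 0 := by revert a; decide

lemma sum_eq_card {n : ℕ} (v : Fin n → ZMod 2) :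
    ∑ i, v i = ((univ.filter fun i => v i ≠ 0).card : ZMod 2) := by
  rw [← Finset.sum_filter_ne_zero]
  rw [Finset.sum_congr rfl (fun i hi => zmod2_eq_one (mem_filter.mp hi).2)]
  simp

lemma sum_zero_iff_even {n : ℕ} (v : Fin n → ZMod 2) :
    ∑ i, v i = 0 ↔ Even (univ.filter fun i => v i ≠ 0).card := by
  rw [sum_eq_card, ZMod.natCast_eq_zero_iff]
  exact even_iff_two_dvd.symm

lemma exists_perm {n : ℕ} (i j i0 j0 : Fin n) (hij : i ≠ j) (h0 : i0 ≠ j0) :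
    ∃ σ : Equiv.Perm (Fin n), σ i = i0 ∧ σ j = j0 := by
  refine ⟨Equiv.swap (Equiv.swap i i0 j) j0 * Equiv.swap i i0, ?_, ?_⟩
  · have h1 : Equiv.swap i i0 j ≠ i0 := by
      intro h
      apply hij
      have := (Equiv.swap i i0).injective (a₁ := j) (a₂ := i)
      simp [h, Equiv.swap_apply_left] at this
      exact this.symm
    simp only [Equiv.Perm.mul_apply, Equiv.swap_apply_left]
    exact Equiv.swap_apply_of_ne_of_ne (Ne.symm h1) h0
  · simp [Equiv.swap_apply_left]

section main
variable {n : ℕ} {W : Submodule (ZMod 2) (Fin n → ZMod 2)}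
  (hW : ∀ σ : Equiv.Perm (Fin n), ∀ v ∈ W, (fun i => v (σ i)) ∈ W)

include hW

lemma pair_mem {v : Fin n → ZMod 2} (hv : v ∈ W) {i j : Fin n}
    (hi : v i ≠ 0) (hj : v j = 0) :
    Pi.single i (1 : ZMod 2) + Pi.single j 1 ∈ W := by
  have hij : i ≠ j := by rintro rfl; exact hi hj
  have h2 := hW (Equiv.swap i j) v hv
  have h3 := W.add_mem hv h2
  have heq : v + (fun k => v (Equiv.swap i j k)) =
      Pi.single i (1 : ZMod 2) + Pi.single j 1 := by
    funext k
    by_cases hki : k = i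
    · subst hki
      simp [Equiv.swap_apply_left, Pi.single_apply, hij, Ne.symm hij, hj, zmod2_eq_one hi]
    · by_cases hkj : k = j
      · subst hkj
        simp [Equiv.swap_apply_right, Pi.single_apply, Ne.symm hij, hj, zmod2_eq_one hi]
      · simp [Equiv.swap_apply_of_ne_of_ne hki hkj, Pi.single_apply, hki, hkj, zmod2_add_self]
  rw [heq] at h3
  exact h3

lemma pair_mem_all {i0 j0 : Fin n} (h0 : i0 ≠ j0)
    (hpair : Pi.single i0 (1 : ZMod 2) + Pi.single j0 1 ∈ W)
    {i j : Fin n} (hij : i ≠ j) :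
    Pi.single i (1 : ZMod 2) + Pi.single j 1 ∈ W := by
  obtain ⟨σ, hσi, hσj⟩ := exists_perm i j i0 j0 hij h0
  have h2 := hW σ _ hpair
  have heq : (fun k => (Pi.single i0 (1 : ZMod 2) + Pi.single j0 1 : Fin n → ZMod 2) (σ k)) =
      Pi.single i (1 : ZMod 2) + Pi.single j 1 := by
    funext k
    simp only [Pi.add_apply, Pi.single_apply, ← hσi, ← hσj, Equiv.apply_eq_iff_eq]
  rw [heq] at h2
  exact h2

omit hW in
lemma even_mem (hpairs : ∀ i j : Fin n, i ≠ j →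
      Pi.single i (1 : ZMod 2) + Pi.single j 1 ∈ W)
    (v : Fin n → ZMod 2) (hv : Even (univ.filter fun i => v i ≠ 0).card) : v ∈ W := by
  suffices H : ∀ c, ∀ v : Fin n → ZMod 2,
      (univ.filter fun i => v i ≠ 0).card = c → Even c → v ∈ W from H _ v rfl hv
  intro c
  induction c using Nat.strong_induction_on with
  | _ c ih =>
    intro v hc hce
    rcases Nat.eq_zero_or_pos c with h0 | hpos
    · subst h0
      have hv0 : v = 0 := by
        funext k
        by_contra hk
        have hk' : k ∈ univ.filter fun i => v i ≠ 0 := by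
          simp only [mem_filter, mem_univ, true_and]
          simpa using hk
        rw [Finset.card_eq_zero.mp hc] at hk'
        simp at hk'
      rw [hv0]; exact W.zero_mem
    · have h2 : 2 ≤ c := by
        obtain ⟨m, rfl⟩ := hce; omega
      obtain ⟨i, hi, j, hj, hij⟩ := Finset.one_lt_card.mp (by omega : 1 < (univ.filter fun i => v i ≠ 0).card)
      have hvi : v i ≠ 0 := (mem_filter.mp hi).2
      have hvj : v j ≠ 0 := (mem_filter.mp hj).2
      set u : Fin n → ZMod 2 := Pi.single i 1 + Pi.single j 1 with hu
      have hfilt : (univ.filter fun k => (v + u) k ≠ 0) =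
          (univ.filter fun k => v k ≠ 0) \ {i, j} := by
        ext k
        simp only [mem_filter, mem_univ, true_and, mem_sdiff, mem_insert, mem_singleton]
        by_cases hki : k = i
        · subst hki
          simp [hu, Pi.single_apply, hij, zmod2_eq_one hvi, zmod2_one_one]
        · by_cases hkj : k = j
          · subst hkj
            simp [hu, Pi.single_apply, Ne.symm hij, zmod2_eq_one hvj, zmod2_one_one]
          · simp [hu, Pi.single_apply, hki, hkj]
      have hsub : ({i, j} : Finset (Fin n)) ⊆ univ.filter fun k => v k ≠ 0 := by
        intro k hk
        rcases mem_insert.mp hk with rfl | hk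
        · exact hi
        · rw [mem_singleton.mp hk]; exact hj
      have hcard2 : ({i, j} : Finset (Fin n)).card = 2 := Finset.card_pair hij
      have hcard' : (univ.filter fun k => (v + u) k ≠ 0).card = c - 2 := by
        rw [hfilt, Finset.card_sdiff_of_subset hsub, hcard2, hc]
      have hmem : v + u ∈ W := ih (c - 2) (by omega) _ hcard' (by
        obtain ⟨m, rfl⟩ := hce
        exact ⟨m - 1, by omega⟩)
      have hvv : v + u + u = v := by
        rw [add_assoc, show u + u = 0 from funext fun k => zmod2_add_self (u k), add_zero]
      have hmem2 := W.add_mem hmem (hpairs i j hij)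
      rwa [hvv] at hmem2

end main

theorem stmt4 (n : ℕ) (hn : 3 ≤ n) (W : Submodule (ZMod 2) (Fin n → ZMod 2))
    (hW : ∀ σ : Equiv.Perm (Fin n), ∀ v ∈ W, (fun i => v (σ i)) ∈ W) :
    W = ⊥ ∨ W = ⊤ ∨ W = Submodule.span (ZMod 2) {fun _ => 1} ∨
      (W : Set (Fin n → ZMod 2)) =
        {v | Even (Finset.univ.filter fun i => v i ≠ 0).card} := by
  classical
  by_cases htriv : ∀ w ∈ W, w = 0 ∨ w = fun _ => (1 : ZMod 2)
  · by_cases hbot : W = ⊥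
    · exact Or.inl hbot
    · right; right; left
      apply le_antisymm
      · intro w hw
        rcases htriv w hw with rfl | rfl
        · exact Submodule.zero_mem _
        · exact Submodule.mem_span_singleton_self _
      · obtain ⟨w, hw, hw0⟩ := (Submodule.ne_bot_iff W).mp hbot
        rcases htriv w hw with rfl | rfl
        · exact absurd rfl hw0
        · rw [Submodule.span_singleton_le_iff_mem]; exact hw
  · push_neg at htriv
    obtain ⟨v, hv, hv0, hv1⟩ := htriv
    obtain ⟨i, hi⟩ : ∃ i, v i ≠ 0 := by
      by_contra h; push_neg at h; exact hv0 (funext h)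
    obtain ⟨j, hj⟩ : ∃ j, v j = 0 := by
      by_contra h; push_neg at h
      exact hv1 (funext fun k => zmod2_eq_one (h k))
    have hij : i ≠ j := by rintro rfl; exact hi hj
    have hpair := pair_mem hW hv hi hj
    have hpairs : ∀ a b : Fin n, a ≠ b →
        Pi.single a (1 : ZMod 2) + Pi.single b 1 ∈ W :=
      fun a b hab => pair_mem_all hW hij hpair hab
    have heven := even_mem hpairs
    by_cases hsub : ∀ w ∈ W, ∑ k, w k = 0
    · right; right; right
      ext x
      simp only [Set.mem_setOf_eq, SetLike.mem_coe]
      constructor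
      · intro hx; exact (sum_zero_iff_even x).mp (hsub x hx)
      · intro hx; exact heven x hx
    · push_neg at hsub
      obtain ⟨w, hw, hws⟩ := hsub
      right; left
      rw [eq_top_iff]
      intro x _
      by_cases hx : ∑ k, x k = 0
      · exact heven x ((sum_zero_iff_even x).mp hx)
      · have hxw : ∑ k, (x + w) k = 0 := by
          simp only [Pi.add_apply]
          rw [Finset.sum_add_distrib, zmod2_eq_one hx, zmod2_eq_one hws, zmod2_one_one]
        have hmem : x + w ∈ W := heven _ ((sum_zero_iff_even _).mp hxw)
        have hmem2 := W.add_mem hmem hw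
        rwa [add_assoc, show w + w = 0 from funext fun k => zmod2_add_self (w k),
          add_zero] at hmem2
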